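/- Let S be a Z-graded algebra and a ≥ 1. The a-th quasi-Veronese algebra S^{[a]}, whose degree-i component is the a×a matrix algebra with (p,q)-entry S_{ai+p−q} (0 ≤ p,q ≤ a−1), is isomorphic as a graded algebra to the a-Segre product of the polynomial ring k[x] (with deg x = a) with S, after dividing the grading by a. -/

import Mathlib

/-!
# Statement 11

Let `S` be a ℤ-graded `k`-algebra and `a ≥ 1`.  The `a`-th quasi-Veronese algebra `S^{[a]}`,
whose degree-`n` component is the `a×a` matrix space with `(p,q)`-entry `S_{an+p−q}`,
is isomorphic as a graded algebra to the `a`-Segre product of the polynomial ring `k[x]`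
(with `deg x = a`) with `S`, after dividing the grading by `a`.

`S` is encoded internally as a `k`-algebra `B` with grading `ℬ` (`GradedRing`); `k[x]` with
`deg x = a` is graded by `𝒫 i = k·x^m` if `i = a·m` and `0` otherwise.  The `a`-Segre
product sits inside `k[x] ⊗_k Matrix (Fin a) (Fin a) B` with degree-`i` piece
`𝒫_i ⊗ M_i`, and the quasi-Veronese algebra sits inside `Matrix (Fin a) (Fin a) B` with
degree-`n` piece the matrices with entries in `S_{an+p−q}`.  Dividing the grading by `a` is
witnessed by the algebra homomorphism `Ψ : k[x] ⊗ Matrix B → Matrix B` evaluating `x ↦ 1`: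
`Ψ` kills nothing, maps the degree-`an` Segre piece onto the degree-`n` quasi-Veronese
piece, is injective on the Segre product, and the Segre pieces vanish in degrees not of the
form `a·m`. -/

open TensorProduct Polynomial

noncomputable section

variable (k : Type) [CommRing k]
variable (B : Type) [Ring B] [Algebra k B] (ℬ : ℤ → Submodule k B) [GradedRing ℬ]

/-- The matrices whose `(p,q)`-entry lies in `S_{i+p−q}`; for `i = a·n` this is the
degree-`n` piece of the `a`-th quasi-Veronese algebra `S^{[a]}`. -/
def qvPiece (a : ℕ) (i : ℤ) : Submodule k (Matrix (Fin a) (Fin a) B) where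
  carrier := {m | ∀ p q : Fin a, m p q ∈ ℬ (i + (p : ℤ) - (q : ℤ))}
  add_mem' := fun hm hm' p q => (ℬ _).add_mem (hm p q) (hm' p q)
  zero_mem' := fun p q => (ℬ _).zero_mem
  smul_mem' := fun c m hm p q => (ℬ _).smul_mem c (hm p q)

/-- The grading of `k[x]` with `deg x = a` : the degree-`i` piece is `k·x^m` if `i = a·m`,
and `0` otherwise. -/
def polyPiece (a : ℕ) (i : ℤ) : Submodule k (Polynomial k) :=
  ⨆ (m : ℕ) (_ : i = (a : ℤ) * m), Submodule.span k {Polynomial.X ^ m}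

/-- The degree-`i` piece of the `a`-Segre product of `k[x]` (`deg x = a`) with `S`, inside
`k[x] ⊗_k Matrix (Fin a) (Fin a) B`. -/
def polySegrePiece (a : ℕ) (i : ℤ) : Submodule k (Polynomial k ⊗[k] Matrix (Fin a) (Fin a) B) :=
  LinearMap.range (TensorProduct.map (polyPiece k a i).subtype (qvPiece k B ℬ a i).subtype)

/-- The collapse map `k[x] ⊗ₖ Matrix B → Matrix B` evaluating `x ↦ 1`; it witnesses the
division of the grading by `a`. -/
def collapseQV (a : ℕ) : Polynomial k ⊗[k] Matrix (Fin a) (Fin a) B →ₐ[k] Matrix (Fin a) (Fin a) B :=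
  Algebra.TensorProduct.lift
    ((Algebra.ofId k (Matrix (Fin a) (Fin a) B)).comp (Polynomial.aeval (1 : k)))
    (AlgHom.id k (Matrix (Fin a) (Fin a) B))
    (fun p m => by
      rw [AlgHom.comp_apply, Algebra.ofId_apply]
      exact Algebra.commutes _ _)

-- auxiliary lemmas

lemma polyPiece_mul (a m : ℕ) (ha : 1 ≤ a) :
    polyPiece k a ((a : ℤ) * m) = Submodule.span k {(X : Polynomial k) ^ m} := by
  unfold polyPiece
  apply le_antisymm
  · refine iSup_le fun m' => iSup_le fun h => ?_
    have : (m : ℤ) = m' := by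
      have ha' : (a : ℤ) ≠ 0 := by exact_mod_cast Nat.one_le_iff_ne_zero.mp ha
      exact mul_left_cancel₀ ha' h
    have : m = m' := by exact_mod_cast this
    subst this; exact le_rfl
  · exact le_iSup_of_le m (le_iSup_of_le rfl le_rfl)

lemma polyPiece_bot (a : ℕ) (i : ℤ) (h : ∀ m : ℕ, i ≠ (a : ℤ) * m) :
    polyPiece k a i = ⊥ := by
  unfold polyPiece
  exact le_bot_iff.mp (iSup_le fun m => iSup_le fun hm => absurd hm (h m))

lemma segre_bot (a : ℕ) (i : ℤ) (h : ∀ m : ℕ, i ≠ (a : ℤ) * m) :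
    polySegrePiece k B ℬ a i = ⊥ := by
  rw [eq_bot_iff]
  rintro x ⟨y, rfl⟩
  induction y using TensorProduct.induction_on with
  | zero => simp
  | tmul p v =>
      obtain ⟨p, hp⟩ := p
      rw [polyPiece_bot k a i h, Submodule.mem_bot] at hp
      simp [TensorProduct.map_tmul, hp]
  | add s t hs ht => rw [map_add]; exact add_mem hs ht

lemma collapse_tmul (a m : ℕ) (v : Matrix (Fin a) (Fin a) B) :
    collapseQV k B a (((X : Polynomial k) ^ m) ⊗ₜ[k] v) = v := by
  unfold collapseQV
  rw [Algebra.TensorProduct.lift_tmul]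
  simp [Algebra.ofId_apply]

lemma segre_mem (a m : ℕ) (ha : 1 ≤ a) (x : Polynomial k ⊗[k] Matrix (Fin a) (Fin a) B) :
    x ∈ polySegrePiece k B ℬ a ((a : ℤ) * m) ↔
      ∃ v ∈ qvPiece k B ℬ a ((a : ℤ) * m), x = ((X : Polynomial k) ^ m) ⊗ₜ[k] v := by
  constructor
  · rintro ⟨y, rfl⟩
    induction y using TensorProduct.induction_on with
    | zero => exact ⟨0, zero_mem _, by simp [TensorProduct.tmul_zero]⟩
    | tmul p v =>
        obtain ⟨p, hp⟩ := p
        rw [polyPiece_mul k a m ha, Submodule.mem_span_singleton] at hp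
        obtain ⟨c, rfl⟩ := hp
        exact ⟨c • (v : Matrix (Fin a) (Fin a) B), (qvPiece k B ℬ a _).smul_mem c v.2,
          by simp [TensorProduct.map_tmul, TensorProduct.smul_tmul, TensorProduct.tmul_smul]⟩
    | add s t hs ht =>
        obtain ⟨v, hv, hveq⟩ := hs
        obtain ⟨w, hw, hweq⟩ := ht
        exact ⟨v + w, add_mem hv hw, by rw [map_add, hveq, hweq, TensorProduct.tmul_add]⟩
  · rintro ⟨v, hv, rfl⟩
    refine ⟨(⟨X ^ m, ?_⟩ : polyPiece k a ((a:ℤ)*m)) ⊗ₜ ⟨v, hv⟩, rfl⟩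
    rw [polyPiece_mul k a m ha]
    exact Submodule.mem_span_singleton_self _

set_option synthInstance.maxHeartbeats 1000000 in
/-- Entrywise projection to the degree-`a*m` quasi-Veronese piece. -/
def qvProj (a m : ℕ) : Matrix (Fin a) (Fin a) B →ₗ[k] Matrix (Fin a) (Fin a) B where
  toFun M := Matrix.of fun p q => (DirectSum.decompose ℬ (M p q) ((a : ℤ) * m + p - q) : B)
  map_add' M N := by ext p q; simp
  map_smul' c M := by ext p q; simp [DirectSum.decompose_smul, DirectSum.smul_apply]

lemma qvProj_same (a m : ℕ) (v : Matrix (Fin a) (Fin a) B)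
    (hv : v ∈ qvPiece k B ℬ a ((a : ℤ) * m)) : qvProj k B ℬ a m v = v := by
  ext p q
  exact DirectSum.decompose_of_mem_same ℬ (hv p q)

lemma qvProj_ne (a m m' : ℕ) (ha : 1 ≤ a) (hne : m ≠ m') (v : Matrix (Fin a) (Fin a) B)
    (hv : v ∈ qvPiece k B ℬ a ((a : ℤ) * m')) : qvProj k B ℬ a m v = 0 := by
  ext p q
  have : ((a : ℤ) * m' + p - q) ≠ ((a : ℤ) * m + p - q) := by
    intro h
    have : (a : ℤ) * m' = (a : ℤ) * m := by omega
    have ha' : (a : ℤ) ≠ 0 := by exact_mod_cast Nat.one_le_iff_ne_zero.mp ha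
    have h2 := mul_left_cancel₀ ha' this
    have h3 : m' = m := by exact_mod_cast h2
    exact hne h3.symm
  show (DirectSum.decompose ℬ (v p q) ((a : ℤ) * m + p - q) : B) = 0
  exact DirectSum.decompose_of_mem_ne ℬ (hv p q) this

/-- The `a`-th quasi-Veronese algebra `S^{[a]}` is isomorphic, as a graded
algebra, to the `a`-Segre product of `k[x]` (`deg x = a`) with `S` after dividing the grading
by `a`: the Segre pieces vanish in degrees not of the form `a·m`, and the algebra map `Ψ`
(evaluation `x ↦ 1`) is injective on the Segre product and identifies the degree-`a·n` Segre
piece with the degree-`n` quasi-Veronese piece. -/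
theorem quasiVeronese_iso_aSegre (a : ℕ) (ha : 1 ≤ a) :
    -- the `a`-Segre product with `k[x]` is concentrated in degrees `a·ℕ` …
    (∀ i : ℤ, (∀ m : ℕ, i ≠ (a : ℤ) * m) → polySegrePiece k B ℬ a i = ⊥) ∧
    -- … and `Ψ` identifies its degree-`a·n` piece with the degree-`n` quasi-Veronese piece
    (∀ n : ℕ, Submodule.map (collapseQV k B a).toLinearMap
        (polySegrePiece k B ℬ a ((a : ℤ) * n)) = qvPiece k B ℬ a ((a : ℤ) * n)) ∧
    -- `Ψ` is injective on the `a`-Segre product …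
    (Set.InjOn (collapseQV k B a) ↑(⨆ i : ℤ, polySegrePiece k B ℬ a i)) ∧
    -- … and maps it onto the quasi-Veronese algebra (`Ψ` being an algebra homomorphism,
    -- this is an isomorphism of graded algebras after dividing the grading by `a`)
    (Submodule.map (collapseQV k B a).toLinearMap (⨆ i : ℤ, polySegrePiece k B ℬ a i)
      = ⨆ n : ℕ, qvPiece k B ℬ a ((a : ℤ) * n)) := by
  -- Part 2
  have h2 : ∀ n : ℕ, Submodule.map (collapseQV k B a).toLinearMap
      (polySegrePiece k B ℬ a ((a : ℤ) * n)) = qvPiece k B ℬ a ((a : ℤ) * n) := by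
    intro n
    apply le_antisymm
    · rintro _ ⟨y, hy, rfl⟩
      obtain ⟨v, hv, rfl⟩ := (segre_mem k B ℬ a n ha y).mp hy
      rw [AlgHom.toLinearMap_apply, collapse_tmul]
      exact hv
    · intro v hv
      exact ⟨((X : Polynomial k) ^ n) ⊗ₜ[k] v,
        (segre_mem k B ℬ a n ha _).mpr ⟨v, hv, rfl⟩, collapse_tmul k B a n v⟩
  -- representation lemma for the big sup
  have hrep : ∀ x ∈ (⨆ i : ℤ, polySegrePiece k B ℬ a i),
      ∃ f : ℕ →₀ Matrix (Fin a) (Fin a) B,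
        (∀ m : ℕ, f m ∈ qvPiece k B ℬ a ((a : ℤ) * m)) ∧
        x = f.sum (fun m v => ((X : Polynomial k) ^ m) ⊗ₜ[k] v) := by
    intro x hx
    refine Submodule.iSup_induction' (fun i : ℤ => polySegrePiece k B ℬ a i) (motive := fun x _ =>
      ∃ f : ℕ →₀ Matrix (Fin a) (Fin a) B,
        (∀ m : ℕ, f m ∈ qvPiece k B ℬ a ((a : ℤ) * m)) ∧
        x = f.sum (fun m v => ((X : Polynomial k) ^ m) ⊗ₜ[k] v)) ?_ ?_ ?_ hx
    · intro i y hy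
      replace hy : y ∈ polySegrePiece k B ℬ a i := hy
      by_cases h : ∃ m : ℕ, i = (a : ℤ) * m
      · obtain ⟨m, rfl⟩ := h
        rw [segre_mem k B ℬ a m ha] at hy
        obtain ⟨v, hv, rfl⟩ := hy
        refine ⟨Finsupp.single m v, ?_, ?_⟩
        · intro m'
          rw [Finsupp.single_apply]
          split
          · next h => exact h ▸ hv
          · exact zero_mem _
        · rw [Finsupp.sum_single_index (by rw [TensorProduct.tmul_zero])]
      · push_neg at h
        rw [segre_bot k B ℬ a i h, Submodule.mem_bot] at hy
        exact ⟨0, fun m => zero_mem _, by simp [hy]⟩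
    · exact ⟨0, fun m => zero_mem _, by simp⟩
    · rintro y z - - ⟨f, hf, rfl⟩ ⟨g, hg, rfl⟩
      refine ⟨f + g, fun m => add_mem (hf m) (hg m), ?_⟩
      rw [Finsupp.sum_add_index' (fun m => TensorProduct.tmul_zero _ _)
        (fun m v w => TensorProduct.tmul_add _ v w)]
  -- kernel triviality on the sup
  have hker : ∀ x ∈ (⨆ i : ℤ, polySegrePiece k B ℬ a i),
      collapseQV k B a x = 0 → x = 0 := by
    intro x hx h0
    obtain ⟨f, hf, rfl⟩ := hrep x hx
    have himg : collapseQV k B a (f.sum fun m v => ((X : Polynomial k) ^ m) ⊗ₜ[k] v)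
        = f.sum fun _ v => v := by
      rw [map_finsuppSum]
      exact Finsupp.sum_congr fun m _ => collapse_tmul k B a m (f m)
    have key : ∀ m0, qvProj k B ℬ a m0 (f.sum fun _ v => v) = f m0 := by
      intro m0
      rw [Finsupp.sum, map_sum,
        Finset.sum_eq_single m0
          (fun b _ hb => qvProj_ne k B ℬ a m0 b ha (Ne.symm hb) (f b) (hf b))
          (fun h => by rw [Finsupp.notMem_support_iff.mp h, map_zero])]
      exact qvProj_same k B ℬ a m0 (f m0) (hf m0)
    have hf0 : ∀ m0, f m0 = 0 := by
      intro m0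
      rw [← key m0, ← himg, h0, map_zero]
    have : f = 0 := Finsupp.ext hf0
    rw [this, Finsupp.sum_zero_index]
  refine ⟨fun i h => segre_bot k B ℬ a i h, h2, ?_, ?_⟩
  · intro x hx y hy hxy
    have hsub : x - y ∈ (⨆ i : ℤ, polySegrePiece k B ℬ a i) := sub_mem hx hy
    have : collapseQV k B a (x - y) = 0 := by rw [map_sub, hxy, sub_self]
    have := hker _ hsub this
    exact sub_eq_zero.mp this
  · rw [Submodule.map_iSup]
    apply le_antisymm
    · refine iSup_le fun i => ?_
      by_cases h : ∃ m : ℕ, i = (a : ℤ) * m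
      · obtain ⟨m, rfl⟩ := h
        rw [h2 m]
        exact le_iSup (fun n : ℕ => qvPiece k B ℬ a ((a : ℤ) * n)) m
      · push_neg at h
        rw [segre_bot k B ℬ a i h, Submodule.map_bot]
        exact bot_le
    · refine iSup_le fun n => ?_
      rw [← h2 n]
      exact le_iSup (fun i : ℤ =>
        Submodule.map (collapseQV k B a).toLinearMap (polySegrePiece k B ℬ a i)) ((a : ℤ) * n)

end
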